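/- Let $n \geq 1$ and let $\lambda_1,\dots,\lambda_n > 0$ with $\bar{\lambda} = \max_i \lambda_i$. Let $Y_1,\dots,Y_n$ be i.i.d. exponential random variables with rate $n$ and set $Z = \mathbf{1}_{\{\sum_{i=1}^n Y_i \leq 1\}} \cdot \prod_{i=1}^n \frac{\lambda_i e^{-\lambda_i Y_i}}{n e^{-n Y_i}}$. Then $\mathbb{E}[Z] \geq \frac{\prod_{i=1}^n \lambda_i}{n^n} \cdot \frac{n^{n}}{(n-1)!} \cdot \frac{1}{\bar{\lambda}^n} \cdot \gamma(n, \bar{\lambda})$, where $\gamma(n,x) = \int_0^x t^{n-1}e^{-t}\,dt$ is the lower incomplete gamma function. -/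

import Mathlib

open MeasureTheory Real ProbabilityTheory
open scoped ENNReal NNReal

noncomputable def G (c : ℝ) (m : ℕ) (x : ℝ) : ℝ :=
  ∫ s in (0:ℝ)..x, s ^ m * Real.exp (-(c * s)) / m.factorial

lemma cont_integrand (c : ℝ) (m : ℕ) :
    Continuous fun s : ℝ => s ^ m * Real.exp (-(c * s)) / m.factorial := by
  continuity

lemma hasDerivAt_G (c : ℝ) (m : ℕ) (x : ℝ) :
    HasDerivAt (G c m) (x ^ m * Real.exp (-(c * x)) / m.factorial) x := by
  refine intervalIntegral.integral_hasDerivAt_right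
    ((cont_integrand c m).intervalIntegrable _ _)
    ((cont_integrand c m).stronglyMeasurable.stronglyMeasurableAtFilter)
    (cont_integrand c m).continuousAt

lemma continuous_G (c : ℝ) (m : ℕ) : Continuous (G c m) :=
  continuous_iff_continuousAt.2 fun x => (hasDerivAt_G c m x).continuousAt

lemma G_rec (c : ℝ) (m : ℕ) (u : ℝ) :
    G c m u = c * G c (m+1) u + u ^ (m+1) * Real.exp (-(c * u)) / (m+1).factorial := by
  have hF : ∀ s : ℝ, HasDerivAt (fun s : ℝ => s ^ (m+1) * Real.exp (-(c * s)) / (m+1).factorial)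
      (s ^ m * Real.exp (-(c * s)) / m.factorial
        - c * (s ^ (m+1) * Real.exp (-(c * s)) / (m+1).factorial)) s := by
    intro s
    have h1 : HasDerivAt (fun s : ℝ => s ^ (m+1)) ((m+1 : ℕ) * s ^ m) s := by
      simpa using hasDerivAt_pow (m+1) s
    have h2 : HasDerivAt (fun s : ℝ => Real.exp (-(c * s))) (-c * Real.exp (-(c * s))) s := by
      have : HasDerivAt (fun s : ℝ => -(c * s)) (-c) s := by
        exact (((hasDerivAt_id s).const_mul c).neg).congr_deriv (by simp)
      simpa [mul_comm] using this.exp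
    have := (h1.mul h2).div_const ((m+1).factorial : ℝ)
    refine this.congr_deriv ?_
    have hfac : ((m+1).factorial : ℝ) = (m+1) * m.factorial := by
      push_cast [Nat.factorial_succ]; ring
    rw [hfac]; push_cast; field_simp
    ring
  have key := intervalIntegral.integral_eq_sub_of_hasDerivAt (fun s _ => hF s)
    (Continuous.intervalIntegrable (by continuity) 0 u)
  rw [intervalIntegral.integral_sub ((cont_integrand c m).intervalIntegrable _ _)
      (Continuous.intervalIntegrable (by continuity) _ _),
    intervalIntegral.integral_const_mul] at key
  have h0 : (0:ℝ) ^ (m+1) * Real.exp (-(c * 0)) / (m+1).factorial = 0 := by simp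
  rw [h0, sub_zero] at key
  have : G c m u - c * G c (m+1) u = u ^ (m+1) * Real.exp (-(c*u)) / (m+1).factorial := key
  linarith

lemma conv_step (c : ℝ) (m : ℕ) (a : ℝ) :
    ∫ t in (0:ℝ)..a, Real.exp (-(c * t)) * G c m (a - t) = G c (m+1) a := by
  have step1 : (∫ t in (0:ℝ)..a, Real.exp (-(c * t)) * G c m (a - t))
      = ∫ x in (0:ℝ)..a, Real.exp (-(c * (a - x))) * G c m x := by
    have := intervalIntegral.integral_comp_sub_left
      (fun x => Real.exp (-(c * (a - x))) * G c m x) a (a := 0) (b := a)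
    simpa using this
  rw [step1]
  have step2 : ∀ x : ℝ, Real.exp (-(c * (a - x))) * G c m x
      = Real.exp (-(c*a)) * (Real.exp (c * x) * G c m x) := by
    intro x
    rw [← mul_assoc, ← Real.exp_add]
    ring_nf
  simp_rw [step2]
  rw [intervalIntegral.integral_const_mul]
  have hH : ∀ u : ℝ, HasDerivAt (fun u : ℝ => Real.exp (c * u) * G c (m+1) u)
      (Real.exp (c * u) * G c m u) u := by
    intro u
    have h1 : HasDerivAt (fun u : ℝ => Real.exp (c * u)) (c * Real.exp (c * u)) u := by
      have : HasDerivAt (fun u : ℝ => c * u) c u := by simpa using (hasDerivAt_id u).const_mul c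
      simpa [mul_comm] using this.exp
    have := h1.mul (hasDerivAt_G c (m+1) u)
    refine this.congr_deriv ?_
    rw [G_rec c m u]
    ring
  have key := intervalIntegral.integral_eq_sub_of_hasDerivAt (fun u _ => hH u)
    (Continuous.intervalIntegrable
      ((Real.continuous_exp.comp (continuous_const.mul continuous_id)).mul (continuous_G c m)) 0 a)
  rw [key]
  have : G c (m+1) 0 = 0 := by simp [G]
  rw [this, mul_zero, sub_zero, ← mul_assoc, ← Real.exp_add]
  simp

lemma expPDFReal_eq (r x : ℝ) :
    exponentialPDFReal r x = if 0 ≤ x then r * Real.exp (-(r * x)) else 0 := by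
  rw [exponentialPDFReal, gammaPDFReal]
  simp only [rpow_one, Real.Gamma_one, div_one, sub_self, rpow_zero, mul_one]

lemma integral_expMeasure (r : ℝ) (hr : 0 < r) (φ : ℝ → ℝ) :
    ∫ x, φ x ∂(expMeasure r)
      = ∫ x, (if 0 ≤ x then r * Real.exp (-(r * x)) else 0) * φ x := by
  have h : expMeasure r = volume.withDensity
      (fun x => ((Real.toNNReal (exponentialPDFReal r x)) : ℝ≥0∞)) := by
    rw [expMeasure, gammaMeasure]; rfl
  rw [h, integral_withDensity_eq_integral_smul (by measurability) φ]
  congr 1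
  ext x
  rw [NNReal.smul_def, smul_eq_mul, Real.coe_toNNReal _ (exponentialPDFReal_nonneg hr x),
    expPDFReal_eq]

noncomputable def Jfun (r c : ℝ) (m : ℕ) (a : ℝ) : ℝ :=
  ∫ y : Fin m → ℝ,
    Set.indicator {y : Fin m → ℝ | (∀ i, 0 ≤ y i) ∧ ∑ i, y i ≤ a}
      (fun y => ∏ i, Real.exp ((r - c) * y i)) y
    ∂(Measure.pi fun _ => expMeasure r)

lemma measurableSet_simplex (m : ℕ) (a : ℝ) :
    MeasurableSet {y : Fin m → ℝ | (∀ i, 0 ≤ y i) ∧ ∑ i, y i ≤ a} := by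
  have h : {y : Fin m → ℝ | (∀ i, 0 ≤ y i) ∧ ∑ i, y i ≤ a}
      = (⋂ i, {y : Fin m → ℝ | 0 ≤ y i}) ∩ {y : Fin m → ℝ | ∑ i, y i ≤ a} := by
    ext y; simp
  rw [h]
  exact (MeasurableSet.iInter fun i =>
      measurableSet_le measurable_const (measurable_pi_apply i)).inter
    (measurableSet_le (Finset.measurable_sum _ fun i _ => measurable_pi_apply i)
      measurable_const)

lemma measurable_J_integrand (r c : ℝ) (m : ℕ) (a : ℝ) :
    Measurable (fun y : Fin m → ℝ =>
      Set.indicator {y : Fin m → ℝ | (∀ i, 0 ≤ y i) ∧ ∑ i, y i ≤ a}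
        (fun y => ∏ i, Real.exp ((r - c) * y i)) y) := by
  exact Measurable.indicator
    (Finset.measurable_prod _ fun i _ =>
      (Real.continuous_exp.measurable).comp ((measurable_pi_apply i).const_mul _))
    (measurableSet_simplex m a)

lemma J_neg (r c : ℝ) (m : ℕ) (a : ℝ) (ha : a < 0) : Jfun r c m a = 0 := by
  have h : {y : Fin m → ℝ | (∀ i, 0 ≤ y i) ∧ ∑ i, y i ≤ a} = ∅ := by
    ext y
    simp only [Set.mem_setOf_eq, Set.mem_empty_iff_false, iff_false, not_and]
    intro h0 hs
    have : (0:ℝ) ≤ ∑ i, y i := Finset.sum_nonneg fun i _ => h0 i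
    linarith
  simp [Jfun, h]

lemma hpt_lemma (r c : ℝ) (m : ℕ) (a : ℝ) (z : ℝ × (Fin (m+1) → ℝ)) :
      Set.indicator {y : Fin (m+2) → ℝ | (∀ i, 0 ≤ y i) ∧ ∑ i, y i ≤ a}
        (fun y => ∏ i, Real.exp ((r - c) * y i))
        ((MeasurableEquiv.piFinSuccAbove (fun _ : Fin (m+2) => ℝ) 0).symm z)
      = (if 0 ≤ z.1 then Real.exp ((r - c) * z.1) else 0) *
          Set.indicator {y : Fin (m+1) → ℝ | (∀ j, 0 ≤ y j) ∧ ∑ j, y j ≤ a - z.1}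
            (fun y => ∏ j, Real.exp ((r - c) * y j)) z.2 := by
  have hsymm : (MeasurableEquiv.piFinSuccAbove (fun _ : Fin (m+2) => ℝ) 0).symm z
      = Fin.insertNth 0 z.1 z.2 := rfl
  rw [hsymm]
  simp only [Set.indicator_apply, Set.mem_setOf_eq]
  have hforall : (∀ i, 0 ≤ (Fin.insertNth 0 z.1 z.2 : Fin (m+2) → ℝ) i)
      ↔ 0 ≤ z.1 ∧ ∀ j, 0 ≤ z.2 j := by
    rw [Fin.forall_iff_succAbove (0 : Fin (m+2))]
    simp
  have hsum : ∑ i, (Fin.insertNth 0 z.1 z.2 : Fin (m+2) → ℝ) i = z.1 + ∑ j, z.2 j := by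
    rw [Fin.sum_univ_succAbove _ (0 : Fin (m+2))]
    simp
  have hprod : ∏ i, Real.exp ((r - c) * (Fin.insertNth 0 z.1 z.2 : Fin (m+2) → ℝ) i)
      = Real.exp ((r - c) * z.1) * ∏ j, Real.exp ((r - c) * z.2 j) := by
    rw [Fin.prod_univ_succAbove _ (0 : Fin (m+2))]
    simp
  simp only [hforall, hsum, hprod]
  by_cases h1 : 0 ≤ z.1 <;> by_cases h2 : (∀ j, 0 ≤ z.2 j) ∧ ∑ j, z.2 j ≤ a - z.1
  · rw [if_pos ⟨⟨h1, h2.1⟩, by linarith [h2.2]⟩, if_pos h1, if_pos h2]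
  · rw [if_neg, if_neg h2, mul_zero]
    rintro ⟨⟨ha1, ha2⟩, ha3⟩
    exact h2 ⟨ha2, by linarith⟩
  · rw [if_neg, if_neg h1, zero_mul]
    rintro ⟨⟨ha1, ha2⟩, ha3⟩
    exact h1 ha1
  · rw [if_neg, if_neg h1, zero_mul]
    rintro ⟨⟨ha1, ha2⟩, ha3⟩
    exact h1 ha1

lemma J_eq (r c : ℝ) (hr : 0 < r) :
    ∀ m : ℕ, ∀ a : ℝ, 0 ≤ a → Jfun r c (m+1) a = r ^ (m+1) * G c m a := by
  haveI := isProbabilityMeasure_expMeasure hr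
  intro m
  induction m with
  | zero =>
    intro a ha
    show Jfun r c 1 a = r ^ 1 * G c 0 a
    rw [Jfun]
    have mp := (measurePreserving_funUnique (expMeasure r) (Fin 1)).symm
      (MeasurableEquiv.funUnique (Fin 1) ℝ)
    erw [← mp.integral_comp (MeasurableEquiv.measurableEmbedding _)]
    have hpt : ∀ x : ℝ,
        Set.indicator {y : Fin 1 → ℝ | (∀ i, 0 ≤ y i) ∧ ∑ i, y i ≤ a}
          (fun y => ∏ i, Real.exp ((r - c) * y i))
          ((MeasurableEquiv.funUnique (Fin 1) ℝ).symm x)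
        = if 0 ≤ x ∧ x ≤ a then Real.exp ((r - c) * x) else 0 := by
      intro x
      simp [Set.indicator_apply, MeasurableEquiv.funUnique, Equiv.funUnique]
      exact if_congr Iff.rfl rfl rfl
    simp_rw [hpt]
    rw [integral_expMeasure r hr]
    have hpt2 : ∀ x : ℝ,
        (if 0 ≤ x then r * Real.exp (-(r * x)) else 0) *
          (if 0 ≤ x ∧ x ≤ a then Real.exp ((r - c) * x) else 0)
        = Set.indicator (Set.Icc 0 a) (fun x => r * Real.exp (-(c * x))) x := by
      intro x
      rw [Set.indicator_apply]
      by_cases h1 : 0 ≤ x <;> by_cases h2 : x ≤ a <;>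
        simp [h1, h2, Set.mem_Icc]
      rw [mul_assoc, ← Real.exp_add]
      ring_nf
    simp_rw [hpt2]
    rw [integral_indicator measurableSet_Icc, integral_Icc_eq_integral_Ioc,
      ← intervalIntegral.integral_of_le ha]
    have : G c 0 a = ∫ x in (0:ℝ)..a, Real.exp (-(c * x)) := by
      rw [G]; congr 1; ext s; simp
    rw [this, pow_one, ← intervalIntegral.integral_const_mul]
  | succ m IH =>
    intro a ha
    rw [Jfun]
    have mp := (measurePreserving_piFinSuccAbove
      (fun _ : Fin (m+2) => expMeasure r) 0).symm
      (MeasurableEquiv.piFinSuccAbove (fun _ : Fin (m+2) => ℝ) 0)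
    rw [← mp.integral_comp (MeasurableEquiv.measurableEmbedding _)]
    simp_rw [hpt_lemma r c m a]
    -- integrability
    set ν := Measure.pi (fun _ : Fin (m+1) => expMeasure r) with hν
    have hmeasF : Measurable (fun z : ℝ × (Fin (m+1) → ℝ) =>
        (if 0 ≤ z.1 then Real.exp ((r - c) * z.1) else 0) *
          Set.indicator {y : Fin (m+1) → ℝ | (∀ j, 0 ≤ y j) ∧ ∑ j, y j ≤ a - z.1}
            (fun y => ∏ j, Real.exp ((r - c) * y j)) z.2) := by
      have hset : MeasurableSet {z : ℝ × (Fin (m+1) → ℝ) |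
          (∀ j, 0 ≤ z.2 j) ∧ ∑ j, z.2 j ≤ a - z.1} := by
        have h : {z : ℝ × (Fin (m+1) → ℝ) | (∀ j, 0 ≤ z.2 j) ∧ ∑ j, z.2 j ≤ a - z.1}
            = (⋂ j, {z : ℝ × (Fin (m+1) → ℝ) | 0 ≤ z.2 j})
              ∩ {z : ℝ × (Fin (m+1) → ℝ) | ∑ j, z.2 j ≤ a - z.1} := by
          ext z; simp
        rw [h]
        refine MeasurableSet.inter (MeasurableSet.iInter fun j => ?_) ?_
        · exact measurableSet_le measurable_const
            (Measurable.eval measurable_snd)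
        · exact measurableSet_le
            (Finset.measurable_sum _ fun j _ => (measurable_pi_apply j).comp measurable_snd)
            (measurable_const.sub measurable_fst)
      have heq : (fun z : ℝ × (Fin (m+1) → ℝ) =>
          (if 0 ≤ z.1 then Real.exp ((r - c) * z.1) else 0) *
            Set.indicator {y : Fin (m+1) → ℝ | (∀ j, 0 ≤ y j) ∧ ∑ j, y j ≤ a - z.1}
              (fun y => ∏ j, Real.exp ((r - c) * y j)) z.2)
          = fun z : ℝ × (Fin (m+1) → ℝ) =>
          (if 0 ≤ z.1 then Real.exp ((r - c) * z.1) else 0) *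
            (if (∀ j, 0 ≤ z.2 j) ∧ ∑ j, z.2 j ≤ a - z.1
              then ∏ j, Real.exp ((r - c) * z.2 j) else 0) := by
        funext z
        rw [Set.indicator_apply]
        rfl
      rw [heq]
      exact Measurable.mul
        (Measurable.ite (measurableSet_le measurable_const measurable_fst)
          (Real.measurable_exp.comp (measurable_fst.const_mul (r - c))) measurable_const)
        (Measurable.ite hset
          (Finset.measurable_prod _ fun j _ =>
            Real.measurable_exp.comp (((measurable_pi_apply j).comp measurable_snd).const_mul _))
          measurable_const)
    have hbound : ∀ z : ℝ × (Fin (m+1) → ℝ),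
        ‖(if 0 ≤ z.1 then Real.exp ((r - c) * z.1) else 0) *
          Set.indicator {y : Fin (m+1) → ℝ | (∀ j, 0 ≤ y j) ∧ ∑ j, y j ≤ a - z.1}
            (fun y => ∏ j, Real.exp ((r - c) * y j)) z.2‖ ≤ Real.exp (|r - c| * a) := by
      intro z
      by_cases h1 : 0 ≤ z.1
      · rw [if_pos h1]
        by_cases h2 : z.2 ∈ {y : Fin (m+1) → ℝ | (∀ j, 0 ≤ y j) ∧ ∑ j, y j ≤ a - z.1}
        · rw [Set.indicator_of_mem h2]
          obtain ⟨h2a, h2b⟩ := h2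
          have hprod : (∏ j, Real.exp ((r - c) * z.2 j))
              = Real.exp (∑ j, (r - c) * z.2 j) := (Real.exp_sum _ _).symm
          rw [hprod, ← Real.exp_add, Real.norm_eq_abs, Real.abs_exp, Real.exp_le_exp]
          have hkey : (r - c) * z.1 + ∑ j, (r - c) * z.2 j
              = (r - c) * (z.1 + ∑ j, z.2 j) := by
            rw [mul_add, Finset.mul_sum]
          rw [hkey]
          have hs0 : 0 ≤ z.1 + ∑ j, z.2 j :=
            add_nonneg h1 (Finset.sum_nonneg fun j _ => h2a j)
          have hsa : z.1 + ∑ j, z.2 j ≤ a := by linarith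
          calc (r - c) * (z.1 + ∑ j, z.2 j)
              ≤ |r - c| * (z.1 + ∑ j, z.2 j) :=
                mul_le_mul_of_nonneg_right (le_abs_self _) hs0
            _ ≤ |r - c| * a := mul_le_mul_of_nonneg_left hsa (abs_nonneg _)
        · rw [Set.indicator_of_notMem h2, mul_zero, norm_zero]
          exact (Real.exp_pos _).le
      · rw [if_neg h1, zero_mul, norm_zero]
        exact (Real.exp_pos _).le
    have hInt : Integrable (fun z : ℝ × (Fin (m+1) → ℝ) =>
        (if 0 ≤ z.1 then Real.exp ((r - c) * z.1) else 0) *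
          Set.indicator {y : Fin (m+1) → ℝ | (∀ j, 0 ≤ y j) ∧ ∑ j, y j ≤ a - z.1}
            (fun y => ∏ j, Real.exp ((r - c) * y j)) z.2)
        ((expMeasure r).prod ν) :=
      Integrable.mono' (integrable_const _) hmeasF.aestronglyMeasurable
        (Filter.Eventually.of_forall hbound)
    rw [MeasureTheory.integral_prod _ hInt]
    have hinner : ∀ t : ℝ,
        (∫ y, (if 0 ≤ t then Real.exp ((r - c) * t) else 0) *
          Set.indicator {y : Fin (m+1) → ℝ | (∀ j, 0 ≤ y j) ∧ ∑ j, y j ≤ a - t}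
            (fun y => ∏ j, Real.exp ((r - c) * y j)) y ∂ν)
        = (if 0 ≤ t then Real.exp ((r - c) * t) else 0) * Jfun r c (m+1) (a - t) := by
      intro t
      rw [MeasureTheory.integral_const_mul]
      rfl
    simp_rw [hinner]
    rw [integral_expMeasure r hr]
    have hpt3 : ∀ t : ℝ,
        (if 0 ≤ t then r * Real.exp (-(r * t)) else 0) *
          ((if 0 ≤ t then Real.exp ((r - c) * t) else 0) * Jfun r c (m+1) (a - t))
        = Set.indicator (Set.Icc 0 a)
            (fun t => r ^ (m+2) * (Real.exp (-(c * t)) * G c m (a - t))) t := by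
      intro t
      rw [Set.indicator_apply]
      by_cases h1 : 0 ≤ t
      · by_cases h2 : t ≤ a
        · rw [if_pos h1, if_pos h1, if_pos (Set.mem_Icc.mpr ⟨h1, h2⟩),
            IH (a - t) (by linarith)]
          rw [show r * Real.exp (-(r*t)) * (Real.exp ((r-c)*t) * (r^(m+1) * G c m (a-t)))
            = r * r^(m+1) * (Real.exp (-(r*t)) * Real.exp ((r-c)*t)) * G c m (a-t) by ring,
            ← Real.exp_add]
          ring_nf
        · rw [if_neg (fun h => h2 (Set.mem_Icc.mp h).2),
            J_neg r c (m+1) (a-t) (by linarith)]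
          ring
      · rw [if_neg h1, if_neg (fun h => h1 (Set.mem_Icc.mp h).1)]
        ring
    simp_rw [hpt3]
    rw [integral_indicator measurableSet_Icc, integral_Icc_eq_integral_Ioc,
      ← intervalIntegral.integral_of_le ha, intervalIntegral.integral_const_mul,
      conv_step]

open MeasureTheory ProbabilityTheory Real

/-- **Lower bound on the first moment of the importance-sampling estimator.**
If `Y i ~ Exp(n)` are i.i.d., `lamBar = max lamᵢ`, and
`Z = 1_{∑ Yᵢ ≤ 1} · ∏ (lamᵢ e^{-lamᵢ Yᵢ}) / (n e^{-n Yᵢ})`, then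
`E[Z] ≥ (∏ lamᵢ / nⁿ) · nⁿ/(n-1)! · 1/lamBarⁿ · γ(n, lamBar)`,
where `γ(n,x) = ∫₀ˣ tⁿ⁻¹ e⁻ᵗ dt` is the lower incomplete gamma function. -/
theorem is_estimator_first_moment_bound
    {Ω : Type*} [MeasureSpace Ω] [IsProbabilityMeasure (ℙ : Measure Ω)]
    (n : ℕ) (hn : 1 ≤ n) (lam : Fin n → ℝ) (hlam : ∀ i, 0 < lam i)
    (lamBar : ℝ)
    (hBar : IsGreatest (Set.range lam) lamBar)
    (Y : Fin n → Ω → ℝ)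
    (hYmeas : ∀ i, Measurable (Y i))
    (hYindep : iIndepFun Y ℙ)
    (hYdist : ∀ i, Measure.map (Y i) ℙ = expMeasure n)
    (Z : Ω → ℝ)
    (hZ : Z = fun ω => (if ∑ i, Y i ω ≤ 1 then (1 : ℝ) else 0) *
      ∏ i, (lam i * Real.exp (-(lam i) * Y i ω)) / ((n : ℝ) * Real.exp (-(n : ℝ) * Y i ω))) :
    ((∏ i, lam i) / (n : ℝ) ^ n) * ((n : ℝ) ^ n / (Nat.factorial (n - 1) : ℝ)) *
        (1 / lamBar ^ n) * (∫ t in (0 : ℝ)..lamBar, t ^ (n - 1) * Real.exp (-t)) ≤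
      ∫ ω, Z ω ∂ℙ := by
  obtain ⟨m, rfl⟩ : ∃ m, n = m + 1 := ⟨n - 1, (Nat.succ_pred_eq_of_pos hn).symm⟩
  set r : ℝ := ((m + 1 : ℕ) : ℝ) with hr
  have hrpos : 0 < r := by positivity
  obtain ⟨i0, hi0⟩ := hBar.1
  have hBarpos : 0 < lamBar := hi0 ▸ hlam i0
  have hle : ∀ i, lam i ≤ lamBar := fun i => hBar.2 ⟨i, rfl⟩
  -- a.e. nonnegativity of the Y i
  have hae : ∀ i, ∀ᵐ ω ∂(ℙ : Measure Ω), 0 ≤ Y i ω := by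
    intro i
    rw [MeasureTheory.ae_iff]
    have hset : {ω | ¬ 0 ≤ Y i ω} = Y i ⁻¹' (Set.Iio 0) := by
      ext ω; simp [not_le]
    rw [hset, ← Measure.map_apply (hYmeas i) measurableSet_Iio, hYdist i,
      expMeasure, gammaMeasure, withDensity_apply _ measurableSet_Iio]
    exact lintegral_gammaPDF_of_nonpos le_rfl
  have haeAll : ∀ᵐ ω ∂(ℙ : Measure Ω), ∀ i, 0 ≤ Y i ω := ae_all_iff.2 hae
  haveI : IsProbabilityMeasure (expMeasure r) := isProbabilityMeasure_expMeasure hrpos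
  -- the joint law
  set X : Ω → (Fin (m+1) → ℝ) := fun ω i => Y i ω with hX
  have hXmeas : Measurable X := measurable_pi_lambda _ hYmeas
  have hmap : Measure.map X ℙ = Measure.pi (fun _ : Fin (m+1) => expMeasure r) := by
    refine (Measure.pi_eq fun s hs => ?_).symm
    rw [Measure.map_apply hXmeas (MeasurableSet.univ_pi hs)]
    have hpre : X ⁻¹' Set.pi Set.univ s = ⋂ i ∈ Finset.univ, Y i ⁻¹' s i := by
      ext ω; simp [hX, Set.mem_pi]
    rw [hpre, hYindep.measure_inter_preimage_eq_mul Finset.univ (fun i _ => hs i)]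
    refine Finset.prod_congr rfl fun i _ => ?_
    rw [← Measure.map_apply (hYmeas i) (hs i), hYdist i]
  -- the comparison function
  set F : (Fin (m+1) → ℝ) → ℝ := fun y =>
    Set.indicator {y : Fin (m+1) → ℝ | (∀ i, 0 ≤ y i) ∧ ∑ i, y i ≤ 1}
      (fun y => ∏ i, Real.exp ((r - lamBar) * y i)) y with hF
  have hFmeas : Measurable F := measurable_J_integrand r lamBar (m+1) 1
  have hfacnn : ∀ (i : Fin (m+1)) (ω : Ω),
      0 ≤ lam i * Real.exp (-(lam i) * Y i ω) / (r * Real.exp (-r * Y i ω)) := fun i ω =>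
    div_nonneg (mul_nonneg (hlam i).le (Real.exp_pos _).le)
      (mul_nonneg hrpos.le (Real.exp_pos _).le)
  have hdivnn : ∀ i : Fin (m+1), 0 ≤ lam i / r := fun i => div_nonneg (hlam i).le hrpos.le
  have hFbound : ∀ y, ‖F y‖ ≤ Real.exp |r - lamBar| := by
    intro y
    simp only [hF]
    by_cases h2 : y ∈ {y : Fin (m+1) → ℝ | (∀ i, 0 ≤ y i) ∧ ∑ i, y i ≤ 1}
    · rw [Set.indicator_of_mem h2]
      obtain ⟨h2a, h2b⟩ := h2
      have hprod : (∏ i, Real.exp ((r - lamBar) * y i))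
          = Real.exp (∑ i, (r - lamBar) * y i) := (Real.exp_sum _ _).symm
      rw [hprod, Real.norm_eq_abs, Real.abs_exp, Real.exp_le_exp, ← Finset.mul_sum]
      have hs0 : 0 ≤ ∑ i, y i := Finset.sum_nonneg fun i _ => h2a i
      calc (r - lamBar) * ∑ i, y i ≤ |r - lamBar| * ∑ i, y i :=
            mul_le_mul_of_nonneg_right (le_abs_self _) hs0
        _ ≤ |r - lamBar| * 1 := mul_le_mul_of_nonneg_left h2b (abs_nonneg _)
        _ = |r - lamBar| := mul_one _
    · rw [Set.indicator_of_notMem h2, norm_zero]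
      exact (Real.exp_pos _).le
  set K : ℝ := ∏ i, (lam i / r) with hK
  have hKpos : 0 < K := Finset.prod_pos fun i _ => div_pos (hlam i) hrpos
  set W : Ω → ℝ := fun ω => K * F (X ω) with hW
  -- Z is measurable and integrable
  have hZmeas : Measurable Z := by
    rw [hZ]
    refine Measurable.mul ?_ ?_
    · exact Measurable.ite
        (measurableSet_le (Finset.measurable_sum _ fun i _ => hYmeas i) measurable_const)
        measurable_const measurable_const
    · exact Finset.measurable_prod _ fun i _ =>
        ((Real.measurable_exp.comp ((hYmeas i).const_mul _)).const_mul _).div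
          ((Real.measurable_exp.comp ((hYmeas i).const_mul _)).const_mul _)
  have hfactor : ∀ (i : Fin (m+1)) (ω : Ω),
      lam i * Real.exp (-(lam i) * Y i ω) / (r * Real.exp (-r * Y i ω))
        = (lam i / r) * Real.exp ((r - lam i) * Y i ω) := by
    intro i ω
    rw [mul_div_mul_comm, ← Real.exp_sub]
    congr 1
    ring
  have hZbound : ∀ᵐ ω ∂(ℙ : Measure Ω),
      ‖Z ω‖ ≤ ∏ i, ((lam i / r) * Real.exp |r - lam i|) := by
    filter_upwards [haeAll] with ω hω
    rw [hZ]
    simp only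
    by_cases hS : ∑ i, Y i ω ≤ 1
    · rw [if_pos hS, one_mul]
      have hZnn : 0 ≤ ∏ i, lam i * Real.exp (-(lam i) * Y i ω) / (r * Real.exp (-r * Y i ω)) :=
        Finset.prod_nonneg fun i _ => hfacnn i ω
      rw [Real.norm_eq_abs, abs_of_nonneg hZnn]
      refine Finset.prod_le_prod (fun i _ => hfacnn i ω) fun i _ => ?_
      rw [hfactor i ω]
      refine mul_le_mul_of_nonneg_left ?_ (hdivnn i)
      rw [Real.exp_le_exp]
      have hYle1 : Y i ω ≤ 1 := le_trans
        (Finset.single_le_sum (fun j _ => hω j) (Finset.mem_univ i)) hS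
      calc (r - lam i) * Y i ω ≤ |r - lam i| * Y i ω :=
            mul_le_mul_of_nonneg_right (le_abs_self _) (hω i)
        _ ≤ |r - lam i| * 1 := mul_le_mul_of_nonneg_left hYle1 (abs_nonneg _)
        _ = |r - lam i| := mul_one _
    · rw [if_neg hS, zero_mul, norm_zero]
      exact Finset.prod_nonneg fun i _ =>
        mul_nonneg (hdivnn i) (Real.exp_pos _).le
  have hZint : Integrable Z ℙ :=
    Integrable.mono' (integrable_const _) hZmeas.aestronglyMeasurable hZbound
  have hWint : Integrable W ℙ := by
    refine Integrable.mono' (integrable_const (K * Real.exp |r - lamBar|))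
      ((hFmeas.comp hXmeas).const_mul K).aestronglyMeasurable
      (Filter.Eventually.of_forall fun ω => ?_)
    rw [hW]
    simp only [norm_mul]
    rw [Real.norm_eq_abs K, abs_of_nonneg hKpos.le]
    exact mul_le_mul_of_nonneg_left (hFbound (X ω)) hKpos.le
  -- W ≤ Z a.e.
  have hWZ : W ≤ᵐ[(ℙ : Measure Ω)] Z := by
    filter_upwards [haeAll] with ω hω
    rw [hW, hZ]
    simp only
    by_cases hS : ∑ i, Y i ω ≤ 1
    · rw [if_pos hS, one_mul]
      have hmem : X ω ∈ {y : Fin (m+1) → ℝ | (∀ i, 0 ≤ y i) ∧ ∑ i, y i ≤ 1} :=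
        ⟨fun i => hω i, hS⟩
      simp only [hF]
      rw [Set.indicator_of_mem hmem, hK, ← Finset.prod_mul_distrib]
      refine Finset.prod_le_prod
        (fun i _ => mul_nonneg (hdivnn i) (Real.exp_pos _).le) fun i _ => ?_
      rw [hfactor i ω]
      refine mul_le_mul_of_nonneg_left ?_ (hdivnn i)
      rw [Real.exp_le_exp]
      exact mul_le_mul_of_nonneg_right (sub_le_sub_left (hle i) r) (hω i)
    · rw [if_neg hS, zero_mul]
      have hnmem : X ω ∉ {y : Fin (m+1) → ℝ | (∀ i, 0 ≤ y i) ∧ ∑ i, y i ≤ 1} := by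
        intro hmem
        exact hS hmem.2
      simp only [hF]
      rw [Set.indicator_of_notMem hnmem, mul_zero]
  have hmono : ∫ ω, W ω ∂ℙ ≤ ∫ ω, Z ω ∂ℙ := integral_mono_ae hWint hZint hWZ
  -- compute ∫ W
  have hWval : ∫ ω, W ω ∂ℙ = K * (r ^ (m+1) * G lamBar m 1) := by
    simp only [hW]
    rw [MeasureTheory.integral_const_mul]
    have h1 : ∫ ω, F (X ω) ∂ℙ = ∫ y, F y ∂(Measure.map X ℙ) :=
      (integral_map hXmeas.aemeasurable hFmeas.aestronglyMeasurable).symm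
    rw [h1, hmap]
    have h2 : ∫ y, F y ∂(Measure.pi fun _ : Fin (m+1) => expMeasure r)
        = Jfun r lamBar (m+1) 1 := rfl
    rw [h2, J_eq r lamBar hrpos m 1 zero_le_one]
  -- final algebra
  have hsub : ∫ t in (0:ℝ)..lamBar, t ^ m * Real.exp (-t)
      = lamBar ^ (m+1) * ∫ s in (0:ℝ)..1, s ^ m * Real.exp (-(lamBar * s)) := by
    have h := intervalIntegral.smul_integral_comp_mul_left (a := 0) (b := 1)
      (fun t => t ^ m * Real.exp (-t)) lamBar
    simp only [smul_eq_mul, mul_zero, mul_one] at h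
    rw [← h]
    have hplug : ∀ s : ℝ, (lamBar * s) ^ m * Real.exp (-(lamBar * s))
        = lamBar ^ m * (s ^ m * Real.exp (-(lamBar * s))) := by
      intro s; rw [mul_pow]; ring
    simp_rw [hplug]
    rw [intervalIntegral.integral_const_mul]
    ring
  have hG : G lamBar m 1
      = (∫ s in (0:ℝ)..1, s ^ m * Real.exp (-(lamBar * s))) / m.factorial := by
    rw [G, intervalIntegral.integral_div]
  have hKval : K = (∏ i, lam i) / r ^ (m+1) := by
    rw [hK, Finset.prod_div_distrib, Finset.prod_const, Finset.card_univ, Fintype.card_fin]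
  have hfinal : ((∏ i, lam i) / r ^ (m+1)) * (r ^ (m+1) / ((m+1-1).factorial : ℝ)) *
        (1 / lamBar ^ (m+1)) * (∫ t in (0:ℝ)..lamBar, t ^ (m+1-1) * Real.exp (-t))
      = K * (r ^ (m+1) * G lamBar m 1) := by
    have hm : m + 1 - 1 = m := rfl
    rw [hm, hsub, hG, hKval]
    have hrne : r ^ (m+1) ≠ 0 := by positivity
    have hlne : lamBar ^ (m+1) ≠ 0 := by positivity
    have hfne : (m.factorial : ℝ) ≠ 0 := by
      exact_mod_cast Nat.factorial_ne_zero m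
    field_simp
  rw [hfinal, ← hWval]
  exact hmono
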